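/- Let p be a probability distribution on Fin k, let X_1, ..., X_n be independent samples drawn from p, and let p̂ be the empirical distribution. For any δ ∈ (0,1), setting ε = sqrt((2/n)·(k·log 2 + log(1/δ))), the event ‖p̂ − p‖₁ < ε holds with probability greater than 1 − δ. -/

import Mathlib

open MeasureTheory ProbabilityTheory Real

lemma bern_mgf_le (q l : ℝ) (h0 : 0 ≤ q) (h1 : q ≤ 1) (hl : 0 ≤ l) :
    q * exp (l * (1 - q)) + (1 - q) * exp (l * (-q)) ≤ exp (l ^ 2 / 8) := by
  -- D x = 1 - q + q * exp x > 0
  have hD : ∀ x : ℝ, 0 < 1 - q + q * exp x := by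
    intro x
    rcases eq_or_lt_of_le h0 with h | h
    · simp [← h]
    · have : 0 < q * exp x := mul_pos h (exp_pos x)
      linarith
  set g : ℝ → ℝ := fun x => x ^ 2 / 8 + x * q - Real.log (1 - q + q * exp x) with hg
  set G : ℝ → ℝ := fun x => x / 4 + q - q * exp x / (1 - q + q * exp x) with hG
  have hgd : ∀ x, HasDerivAt g (G x) x := by
    intro x
    have hDd : HasDerivAt (fun x => 1 - q + q * exp x) (q * exp x) x := by
      simpa using ((Real.hasDerivAt_exp x).const_mul q).const_add (1 - q)
    have hlog : HasDerivAt (fun x => Real.log (1 - q + q * exp x))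
        (q * exp x / (1 - q + q * exp x)) x := hDd.log (hD x).ne'
    have h1' : HasDerivAt (fun x : ℝ => x ^ 2 / 8 + x * q) (x / 4 + q) x := by
      have := ((hasDerivAt_pow 2 x).div_const 8).add ((hasDerivAt_id x).mul_const q)
      exact this.congr_deriv (by ring)
    exact h1'.sub hlog
  have hGd : ∀ x, HasDerivAt G (1 / 4 - q * exp x * (1 - q) / (1 - q + q * exp x) ^ 2) x := by
    intro x
    have hDd : HasDerivAt (fun x => 1 - q + q * exp x) (q * exp x) x := by
      simpa using ((Real.hasDerivAt_exp x).const_mul q).const_add (1 - q)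
    have hnum : HasDerivAt (fun x => q * exp x) (q * exp x) x := (Real.hasDerivAt_exp x).const_mul q
    have hdiv := hnum.div hDd (hD x).ne'
    have h1' : HasDerivAt (fun x : ℝ => x / 4 + q) (1 / 4) x := by
      simpa using ((hasDerivAt_id x).div_const 4).add_const q
    have := h1'.sub hdiv
    refine this.congr_deriv ?_
    ring
  have hG0 : G 0 = 0 := by simp [hG]
  have hGnonneg : ∀ x, 0 ≤ x → 0 ≤ G x := by
    intro x hx
    have hmono : Monotone G := by
      apply monotone_of_deriv_nonneg (fun x => (hGd x).differentiableAt)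
      intro x
      rw [(hGd x).deriv]
      have hab : q * exp x * (1 - q) ≤ (1 - q + q * exp x) ^ 2 / 4 := by
        nlinarith [sq_nonneg (1 - q - q * exp x), sq_nonneg (1 - q + q * exp x)]
      have hsq : (0:ℝ) < (1 - q + q * exp x) ^ 2 := pow_pos (hD x) 2
      rw [sub_nonneg, div_le_iff₀ hsq]
      linarith
    calc (0:ℝ) = G 0 := hG0.symm
    _ ≤ G x := hmono hx
  have hmono : MonotoneOn g (Set.Ici (0:ℝ)) := by
    apply monotoneOn_of_deriv_nonneg (convex_Ici 0)
      (fun x _ => (hgd x).differentiableAt.continuousAt.continuousWithinAt)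
      (fun x _ => ((hgd x).differentiableAt).differentiableWithinAt)
    intro x hx
    rw [(hgd x).deriv]
    exact hGnonneg x (le_of_lt (by simpa using hx))
  have hg0 : g 0 = 0 := by simp [hg]
  have hgl : 0 ≤ g l := by
    calc (0:ℝ) = g 0 := hg0.symm
    _ ≤ g l := hmono (Set.mem_Ici.2 le_rfl) (Set.mem_Ici.2 hl) hl
  -- now convert
  have key : Real.log (1 - q + q * exp l) ≤ l ^ 2 / 8 + l * q := by
    simp only [hg] at hgl; linarith
  have h2 : 1 - q + q * exp l ≤ exp (l ^ 2 / 8 + l * q) := by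
    calc 1 - q + q * exp l = exp (Real.log (1 - q + q * exp l)) := (exp_log (hD l)).symm
    _ ≤ exp (l ^ 2 / 8 + l * q) := exp_le_exp.2 key
  have : q * exp (l * (1 - q)) + (1 - q) * exp (l * (-q))
      = exp (-(l * q)) * (1 - q + q * exp l) := by
    rw [show l * (1 - q) = l + -(l*q) by ring, exp_add, show l * (-q) = -(l*q) by ring]
    ring
  rw [this]
  calc exp (-(l*q)) * (1 - q + q * exp l) ≤ exp (-(l*q)) * exp (l ^ 2 / 8 + l * q) :=
        mul_le_mul_of_nonneg_left h2 (exp_pos _).le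
  _ = exp (l ^ 2 / 8) := by rw [← exp_add]; ring_nf
lemma integral_ite_mem {Ω : Type*} [MeasurableSpace Ω] (μ : Measure Ω) [IsProbabilityMeasure μ]
    (A : Set Ω) [DecidablePred (fun ω : Ω => ω ∈ A)] (hA : MeasurableSet A) (a b : ℝ) :
    ∫ ω, (if ω ∈ A then a else b) ∂μ = a * (μ A).toReal + b * (1 - (μ A).toReal) := by
  have : (fun ω => if ω ∈ A then a else b)
      = (fun ω => A.indicator (fun _ => a - b) ω + b) := by
    funext ω
    by_cases h : ω ∈ A <;> simp [h, Set.indicator]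
  rw [this, integral_add ((integrable_const (a-b)).indicator hA) (integrable_const b),
    integral_indicator_const _ hA]
  simp [smul_eq_mul]
  simp only [measureReal_def]
  ring

lemma chernoff_subset {Ω : Type*} [MeasurableSpace Ω] (μ : Measure Ω) [IsProbabilityMeasure μ]
    (k n : ℕ) (p : Fin k → ℝ) (hp0 : ∀ j, 0 ≤ p j) (hp1 : ∑ j, p j = 1)
    (X : Fin n → Ω → Fin k) (hXmeas : ∀ i, Measurable (X i))
    (hindep : iIndepFun X μ)
    (hlaw : ∀ i j, (μ {ω | X i ω = j}).toReal = p j)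
    (S : Finset (Fin k)) (t a : ℝ) (ht : 0 ≤ t) :
    (μ {ω | a ≤ ∑ i, ((if X i ω ∈ S then (1:ℝ) else 0) - ∑ j ∈ S, p j)}).toReal
      ≤ exp (-t * a) * exp (n * (t ^ 2 / 8)) := by
  classical
  set q : ℝ := ∑ j ∈ S, p j with hq
  have hq0 : 0 ≤ q := Finset.sum_nonneg fun j _ => hp0 j
  have hq1 : q ≤ 1 := by
    rw [← hp1]
    exact Finset.sum_le_sum_of_subset_of_nonneg (Finset.subset_univ S) (fun j _ _ => hp0 j)
  set Y : Fin n → Ω → ℝ := fun i ω => (if X i ω ∈ S then (1:ℝ) else 0) - q with hY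
  have hf : Measurable (fun j : Fin k => (if j ∈ S then (1:ℝ) else 0) - q) :=
    measurable_of_countable _
  have hYmeas : ∀ i, Measurable (Y i) := fun i => hf.comp (hXmeas i)
  have hYindep : iIndepFun Y μ :=
    hindep.comp (fun _ => fun j => (if j ∈ S then (1:ℝ) else 0) - q) (fun _ => hf)
  have hA : ∀ i, MeasurableSet {ω | X i ω ∈ S} := fun i =>
    (hXmeas i) ((Set.to_countable _).measurableSet)
  have hμA : ∀ i, (μ {ω | X i ω ∈ S}).toReal = q := by
    intro i
    have : {ω | X i ω ∈ S} = ⋃ j ∈ S, {ω | X i ω = j} := by ext ω; simp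
    rw [this, measure_biUnion_finset]
    · rw [ENNReal.toReal_sum (fun j _ => measure_ne_top μ _)]
      exact Finset.sum_congr rfl fun j _ => hlaw i j
    · intro x _ y _ hxy
      simp only [Function.onFun, Set.disjoint_left]
      intro ω h1 h2
      exact hxy (by simp at h1 h2; rw [← h1, h2])
    · intro j _
      exact hXmeas i (measurableSet_singleton j)
  have hite : ∀ i, (fun ω => exp (t * Y i ω))
      = fun ω => if ω ∈ {ω | X i ω ∈ S} then exp (t * (1 - q)) else exp (t * (-q)) := by
    intro i
    funext ω
    by_cases h : X i ω ∈ S <;> simp [hY, h]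
  have hint : ∀ i, Integrable (fun ω => exp (t * Y i ω)) μ := by
    intro i
    rw [hite i]
    have : (fun ω => if ω ∈ {ω | X i ω ∈ S} then exp (t * (1 - q)) else exp (t * (-q)))
        = fun ω => ({ω | X i ω ∈ S}).indicator
            (fun _ => exp (t * (1 - q)) - exp (t * (-q))) ω + exp (t * (-q)) := by
      funext ω
      by_cases h : ω ∈ {ω | X i ω ∈ S} <;> simp [h, Set.indicator]
    rw [this]
    exact (((integrable_const _).indicator (hA i)).add (integrable_const _))
  have hmgf : ∀ i, mgf (Y i) μ t ≤ exp (t ^ 2 / 8) := by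
    intro i
    have : mgf (Y i) μ t = exp (t * (1 - q)) * q + exp (t * (-q)) * (1 - q) := by
      rw [mgf, hite i, integral_ite_mem μ _ (hA i), hμA i]
    rw [this]
    have := bern_mgf_le q t hq0 hq1 ht
    linarith
  set W : Ω → ℝ := ∑ i, Y i with hW
  have hset : {ω | a ≤ ∑ i, ((if X i ω ∈ S then (1:ℝ) else 0) - q)} = {ω | a ≤ W ω} := by
    ext ω
    simp [hW, hY, Finset.sum_apply]
  rw [hset]
  have hintW : Integrable (fun ω => exp (t * W ω)) μ :=
    hYindep.integrable_exp_mul_sum hYmeas (fun i _ => hint i)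
  have hcher := measure_ge_le_exp_mul_mgf (X := W) (t := t) a ht hintW
  refine hcher.trans ?_
  have hm : mgf W μ t ≤ exp (↑n * (t ^ 2 / 8)) := by
    rw [hW, hYindep.mgf_sum hYmeas]
    calc ∏ i : Fin n, mgf (Y i) μ t ≤ ∏ _i : Fin n, exp (t ^ 2 / 8) :=
          Finset.prod_le_prod (fun i _ => mgf_nonneg) (fun i _ => hmgf i)
    _ = exp (↑n * (t ^ 2 / 8)) := by
        rw [Finset.prod_const, ← Real.exp_nat_mul]
        simp
  exact mul_le_mul_of_nonneg_left hm (exp_pos _).le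

/-- If `p` is a probability distribution on `Fin k`, `X 0, ..., X (n-1)` are
independent samples drawn from `p`, and `phat ω` is the empirical distribution, then for any
`δ ∈ (0,1)`, setting `ε = sqrt ((2/n) * (k * log 2 + log (1/δ)))`, the event
`‖phat - p‖₁ < ε` holds with probability greater than `1 - δ`. -/
theorem empirical_l1_reconstruction
    {Ω : Type*} [MeasurableSpace Ω] (μ : Measure Ω) [IsProbabilityMeasure μ]
    (k n : ℕ) (hn : 0 < n)
    (p : Fin k → ℝ) (hp0 : ∀ j, 0 ≤ p j) (hp1 : ∑ j, p j = 1)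
    (X : Fin n → Ω → Fin k) (hXmeas : ∀ i, Measurable (X i))
    (hindep : iIndepFun X μ)
    (hlaw : ∀ i j, (μ {ω | X i ω = j}).toReal = p j)
    (phat : Ω → Fin k → ℝ)
    (hphat : ∀ ω j, phat ω j
      = (1 / (n : ℝ)) * (Finset.univ.filter (fun i => X i ω = j)).card)
    (δ : ℝ) (hδ0 : 0 < δ) (hδ1 : δ < 1)
    (ε : ℝ) (hε : ε = Real.sqrt ((2 / n) * (k * Real.log 2 + Real.log (1 / δ)))) :
    1 - δ < (μ {ω | ∑ j, |phat ω j - p j| < ε}).toReal := by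
  classical
  have hn' : (0:ℝ) < n := Nat.cast_pos.2 hn
  -- ε is positive and ε^2 = v
  have hlogδ : 0 < Real.log (1 / δ) := Real.log_pos (by rw [one_div]; exact (one_lt_inv_iff₀).2 ⟨hδ0, hδ1⟩)
  have hklog : (0:ℝ) ≤ k * Real.log 2 := mul_nonneg (Nat.cast_nonneg k) (Real.log_nonneg one_le_two)
  have hv : (0:ℝ) < (2 / n) * (k * Real.log 2 + Real.log (1 / δ)) := by
    apply mul_pos (by positivity); linarith
  have hε0 : 0 < ε := by rw [hε]; exact Real.sqrt_pos.2 hv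
  have hε2 : ε ^ 2 = (2 / n) * (k * Real.log 2 + Real.log (1 / δ)) := by
    rw [hε, Real.sq_sqrt hv.le]
  -- partial sums of phat
  have hsum : ∀ (ω : Ω) (S : Finset (Fin k)),
      ∑ j ∈ S, phat ω j = (1 / (n:ℝ)) * ∑ i, (if X i ω ∈ S then (1:ℝ) else 0) := by
    intro ω S
    have : ∀ j, phat ω j = (1 / (n:ℝ)) * ∑ i, (if X i ω = j then (1:ℝ) else 0) := by
      intro j
      rw [hphat ω j]
      congr 1
      rw [Finset.card_filter]
      push_cast
      rfl
    simp_rw [this, ← Finset.mul_sum]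
    congr 1
    rw [Finset.sum_comm]
    congr 1
    funext i
    simp_rw [show ∀ j : Fin k, (if X i ω = j then (1:ℝ) else 0) = (if j = X i ω then (1:ℝ) else 0) by
      intro j; simp [eq_comm]]
    exact Finset.sum_ite_eq' S (X i ω) (fun _ => (1:ℝ))
  have hsum1 : ∀ ω : Ω, ∑ j, phat ω j = 1 := by
    intro ω
    rw [hsum ω Finset.univ]
    simp only [Finset.mem_univ, if_true, Finset.sum_const, Finset.card_univ,
      Fintype.card_fin, nsmul_eq_mul, mul_one]
    field_simp
  -- measurability of the l1 distance
  have hmeasl1 : Measurable (fun ω => ∑ j, |phat ω j - p j|) := by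
    have hpm : ∀ j : Fin k, Measurable (fun ω => phat ω j) := by
      intro j
      have : (fun ω => phat ω j)
          = fun ω => (1 / (n:ℝ)) * ∑ i, (if X i ω = j then (1:ℝ) else 0) := by
        funext ω
        rw [hphat ω j]
        congr 1
        rw [Finset.card_filter]; push_cast; rfl
      rw [this]
      refine Measurable.const_mul ?_ _
      refine Finset.measurable_sum _ (fun i _ => ?_)
      exact Measurable.ite (hXmeas i (measurableSet_singleton j)) measurable_const measurable_const
    exact Finset.measurable_sum _ (fun j _ => ((hpm j).sub measurable_const).abs)
  set bad : Set Ω := {ω | ε ≤ ∑ j, |phat ω j - p j|} with hbad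
  have hbadmeas : MeasurableSet bad := measurableSet_le measurable_const hmeasl1
  -- event inclusion
  set P : Finset (Finset (Fin k)) := Finset.univ.powerset.erase ∅ with hP
  set E : Finset (Fin k) → Set Ω := fun S =>
    {ω | (n:ℝ) * ε / 2 ≤ ∑ i, ((if X i ω ∈ S then (1:ℝ) else 0) - ∑ j ∈ S, p j)} with hE
  have hincl : bad ⊆ ⋃ S ∈ P, E S := by
    intro ω hω
    simp only [hbad, Set.mem_setOf_eq] at hω
    set S₀ : Finset (Fin k) := Finset.univ.filter (fun j => 0 ≤ phat ω j - p j) with hS₀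
    have hsplit : ∑ j, |phat ω j - p j| = 2 * ∑ j ∈ S₀, (phat ω j - p j) := by
      have h0 : ∑ j, (phat ω j - p j) = 0 := by
        rw [Finset.sum_sub_distrib, hsum1 ω, hp1]; ring
      have := Finset.sum_filter_add_sum_filter_not Finset.univ
        (fun j => 0 ≤ phat ω j - p j) (fun j => phat ω j - p j)
      have habs : ∑ j, |phat ω j - p j|
          = ∑ j ∈ S₀, (phat ω j - p j)
            - ∑ j ∈ Finset.univ.filter (fun j => ¬ 0 ≤ phat ω j - p j), (phat ω j - p j) := by
        rw [← Finset.sum_filter_add_sum_filter_not Finset.univ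
          (fun j => 0 ≤ phat ω j - p j) (fun j => |phat ω j - p j|)]
        have e1 : ∑ j ∈ S₀, |phat ω j - p j| = ∑ j ∈ S₀, (phat ω j - p j) :=
          Finset.sum_congr rfl fun j hj => abs_of_nonneg (Finset.mem_filter.1 hj).2
        have e2 : ∑ j ∈ Finset.univ.filter (fun j => ¬ 0 ≤ phat ω j - p j), |phat ω j - p j|
            = - ∑ j ∈ Finset.univ.filter (fun j => ¬ 0 ≤ phat ω j - p j), (phat ω j - p j) := by
          rw [← Finset.sum_neg_distrib]
          exact Finset.sum_congr rfl fun j hj =>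
            abs_of_neg (lt_of_not_ge (Finset.mem_filter.1 hj).2)
        rw [e1, e2]
        ring
      rw [habs]
      linarith [this]
    have hhalf : ε / 2 ≤ ∑ j ∈ S₀, (phat ω j - p j) := by linarith [hω, hsplit ▸ hω]
    have hS₀ne : S₀ ≠ ∅ := by
      intro h
      rw [h] at hhalf
      simp at hhalf
      linarith
    have hS₀P : S₀ ∈ P :=
      Finset.mem_erase.2 ⟨hS₀ne, Finset.mem_powerset.2 (Finset.subset_univ _)⟩
    refine Set.mem_biUnion hS₀P ?_
    · show (n:ℝ) * ε / 2 ≤ _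
      have : ∑ i, ((if X i ω ∈ S₀ then (1:ℝ) else 0) - ∑ j ∈ S₀, p j)
          = (n:ℝ) * ∑ j ∈ S₀, (phat ω j - p j) := by
        rw [Finset.sum_sub_distrib, Finset.sum_sub_distrib, Finset.sum_const, hsum ω S₀]
        field_simp
        simp [nsmul_eq_mul]
      rw [this]
      calc (n:ℝ) * ε / 2 = (n:ℝ) * (ε / 2) := by ring
      _ ≤ (n:ℝ) * ∑ j ∈ S₀, (phat ω j - p j) := by
          exact mul_le_mul_of_nonneg_left hhalf hn'.le
  -- Chernoff per subset + arithmetic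
  have hbound : ∀ S ∈ P, (μ (E S)).toReal ≤ (1/2:ℝ) ^ k * δ := by
    intro S _
    have hc := chernoff_subset μ k n p hp0 hp1 X hXmeas hindep hlaw S (2 * ε)
      ((n:ℝ) * ε / 2) (by linarith)
    refine hc.trans ?_
    have : exp (-(2 * ε) * ((n:ℝ) * ε / 2)) * exp ((n:ℝ) * ((2 * ε) ^ 2 / 8))
        = exp (-((n:ℝ) * ε ^ 2 / 2)) := by
      rw [← Real.exp_add]; congr 1; ring
    rw [this]
    have hexp : (n:ℝ) * ε ^ 2 / 2 = k * Real.log 2 + Real.log (1 / δ) := by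
      rw [hε2]; field_simp
    apply le_of_eq
    rw [hexp, neg_add, Real.exp_add]
    congr 1
    · rw [show -((k:ℝ) * Real.log 2) = (k:ℝ) * Real.log (1/2) by
        rw [one_div, Real.log_inv]; ring]
      rw [Real.exp_nat_mul, Real.exp_log (by norm_num : (0:ℝ) < 1/2)]
    · rw [Real.exp_neg, Real.exp_log (by positivity : (0:ℝ) < 1/δ)]
      rw [one_div, inv_inv]
  -- union bound
  have hPcard : (P.card : ℝ) = 2 ^ k - 1 := by
    have h1 : (Finset.univ.powerset : Finset (Finset (Fin k))).card = 2 ^ k := by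
      rw [Finset.card_powerset, Finset.card_univ, Fintype.card_fin]
    have h2 : (∅ : Finset (Fin k)) ∈ Finset.univ.powerset :=
      Finset.mem_powerset.2 (Finset.empty_subset _)
    rw [hP, Finset.card_erase_of_mem h2, h1]
    have : (1:ℕ) ≤ 2 ^ k := Nat.one_le_two_pow
    push_cast [this]
    ring
  have hμbad : (μ bad).toReal < δ := by
    have h1 : μ bad ≤ ∑ S ∈ P, μ (E S) :=
      (measure_mono hincl).trans (measure_biUnion_finset_le P E)
    have h2 : (μ bad).toReal ≤ ∑ S ∈ P, (μ (E S)).toReal := by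
      calc (μ bad).toReal ≤ (∑ S ∈ P, μ (E S)).toReal := by
            apply ENNReal.toReal_mono _ h1
            exact ENNReal.sum_ne_top.2 fun S _ => measure_ne_top μ _
      _ = ∑ S ∈ P, (μ (E S)).toReal := ENNReal.toReal_sum fun S _ => measure_ne_top μ _
    have h3 : ∑ S ∈ P, (μ (E S)).toReal ≤ (P.card : ℝ) * ((1/2:ℝ) ^ k * δ) := by
      calc ∑ S ∈ P, (μ (E S)).toReal ≤ ∑ _S ∈ P, (1/2:ℝ) ^ k * δ :=
            Finset.sum_le_sum hbound
      _ = (P.card : ℝ) * ((1/2:ℝ) ^ k * δ) := by rw [Finset.sum_const, nsmul_eq_mul]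
    have h4 : (P.card : ℝ) * ((1/2:ℝ) ^ k * δ) < δ := by
      rw [hPcard]
      have hpow : (0:ℝ) < (1/2:ℝ) ^ k * δ := by positivity
      have : ((2:ℝ) ^ k - 1) * ((1/2:ℝ) ^ k * δ) < (2:ℝ) ^ k * ((1/2:ℝ) ^ k * δ) := by
        apply mul_lt_mul_of_pos_right _ hpow
        linarith
      refine this.trans_le ?_
      have : (2:ℝ) ^ k * (1/2:ℝ) ^ k = 1 := by
        rw [← mul_pow]; norm_num
      rw [← mul_assoc, this, one_mul]
    linarith
  -- conclude
  have hgood : {ω | ∑ j, |phat ω j - p j| < ε} = badᶜ := by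
    ext ω; simp [hbad, not_le]
  rw [hgood, measure_compl hbadmeas (measure_ne_top μ _), measure_univ,
    ENNReal.toReal_sub_of_le prob_le_one ENNReal.one_ne_top]
  simp only [ENNReal.toReal_one]
  linarith
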